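/- (Algebraic Kolmogorov theorem.) Let G = (V, E) be a finite connected simple graph and D = (V, A) the associated directed graph with both arcs on each edge. Let P : A → ℝ satisfy P_a ≠ 0 for every a ∈ A. Then P^ω = P^{r(ω)} for every closed path ω in D (where P^ω is the product of the values P_a along the arcs of ω) if and only if there exists κ : V → ℝ with κ(v) ≠ 0 for all v such that κ(v) P_{v→w} = κ(w) P_{w→v} for every arc (v→w) ∈ A. -/

import Mathlib

open SimpleGraph

namespace Stmt16
variable {V : Type*} {G : SimpleGraph V}

noncomputable def F (P : V → V → ℝ) {u v : V} (p : G.Walk u v) : ℝ :=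
  (p.darts.map fun d => P d.toProd.1 d.toProd.2).prod

noncomputable def Fr (P : V → V → ℝ) {u v : V} (p : G.Walk u v) : ℝ :=
  (p.darts.map fun d => P d.toProd.2 d.toProd.1).prod

lemma F_reverse (P : V → V → ℝ) {u v : V} (p : G.Walk u v) : F P p.reverse = Fr P p := by
  simp [F, Fr, Walk.darts_reverse, List.map_map, Function.comp_def, Dart.symm_toProd, List.prod_reverse]

lemma Fr_reverse (P : V → V → ℝ) {u v : V} (p : G.Walk u v) : Fr P p.reverse = F P p := by
  simp [F, Fr, Walk.darts_reverse, List.map_map, Function.comp_def, Dart.symm_toProd, List.prod_reverse]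

lemma F_append (P : V → V → ℝ) {u v w : V} (p : G.Walk u v) (q : G.Walk v w) :
    F P (p.append q) = F P p * F P q := by
  simp [F, Walk.darts_append]

lemma Fr_append (P : V → V → ℝ) {u v w : V} (p : G.Walk u v) (q : G.Walk v w) :
    Fr P (p.append q) = Fr P p * Fr P q := by
  simp [Fr, Walk.darts_append]

lemma F_ne_zero {P : V → V → ℝ} (hP : ∀ v w, G.Adj v w → P v w ≠ 0) {u v : V} (p : G.Walk u v) :
    F P p ≠ 0 := by
  refine List.prod_ne_zero ?_
  simp only [List.mem_map, not_exists]
  rintro d ⟨hd, h0⟩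
  exact hP _ _ d.adj h0

lemma Fr_ne_zero {P : V → V → ℝ} (hP : ∀ v w, G.Adj v w → P v w ≠ 0) {u v : V} (p : G.Walk u v) :
    Fr P p ≠ 0 := by
  refine List.prod_ne_zero ?_
  simp only [List.mem_map, not_exists]
  rintro d ⟨hd, h0⟩
  exact hP _ _ d.adj.symm h0

lemma prod_darts (P : V → V → ℝ) {u v : V} (p : G.Walk u v) :
    ∏ i : Fin p.length, P (p.getVert i) (p.getVert (i + 1)) = F P p := by
  induction p with
  | nil => change ∏ i : Fin 0, _ = _; simp [F]
  | cons h q ih =>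
    rw [Walk.length_cons, Fin.prod_univ_succ]
    simp only [Fin.val_succ, Fin.val_zero, Walk.getVert_cons_succ, Walk.getVert_zero]
    rw [ih]
    simp [F]

lemma prod_darts_rev (P : V → V → ℝ) {u v : V} (p : G.Walk u v) :
    ∏ i : Fin p.length, P (p.getVert (i + 1)) (p.getVert i) = Fr P p := by
  induction p with
  | nil => change ∏ i : Fin 0, _ = _; simp [Fr]
  | cons h q ih =>
    rw [Walk.length_cons, Fin.prod_univ_succ]
    simp only [Fin.val_succ, Fin.val_zero, Walk.getVert_cons_succ, Walk.getVert_zero]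
    rw [ih]
    simp [Fr]

end Stmt16

namespace Stmt16x
open Stmt16
variable {V : Type*} {G : SimpleGraph V}

lemma closed_walk_eq (P : V → V → ℝ)
    (hyp : ∀ (n : ℕ) (ω : Fin (n + 1) → V), (∀ i, G.Adj (ω i) (ω (i + 1))) →
      (∏ i, P (ω i) (ω (i + 1))) = ∏ i, P (ω (i + 1)) (ω i))
    {a : V} (c : G.Walk a a) : F P c = Fr P c := by
  cases c with
  | nil => simp [F, Fr]
  | cons h q =>
    set c : G.Walk a a := Walk.cons h q with hc
    set n := q.length with hn
    set ω : Fin (n + 1) → V := fun i => c.getVert i with hω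
    have key : ∀ i : Fin (n + 1), ω (i + 1) = c.getVert (i.val + 1) := by
      intro i
      rcases eq_or_lt_of_le (Nat.lt_succ_iff.mp i.isLt) with he | hlt
      · have h1 : (i + 1 : Fin (n + 1)) = 0 := by
          have : i = Fin.last n := by ext; simpa using he
          simp [this]
        rw [h1]
        show c.getVert 0 = c.getVert (i.val + 1)
        rw [he, Walk.getVert_zero, show (n : ℕ) + 1 = c.length from rfl, Walk.getVert_length]
      · have h1 : ((i + 1 : Fin (n + 1)) : ℕ) = i.val + 1 := by
          rw [Fin.val_add_one_of_lt]
          simpa [Fin.lt_def] using hlt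
        show c.getVert ((i + 1 : Fin (n + 1)) : ℕ) = c.getVert (i.val + 1)
        rw [h1]
    have hadj : ∀ i : Fin (n + 1), G.Adj (ω i) (ω (i + 1)) := by
      intro i
      rw [key i]
      exact c.adj_getVert_succ (by exact i.isLt)
    have hyp' := hyp n ω hadj
    have e1 : (∏ i : Fin (n + 1), P (ω i) (ω (i + 1))) = F P c := by
      rw [← prod_darts P c]
      exact Finset.prod_congr rfl fun i _ => by rw [key i]
    have e2 : (∏ i : Fin (n + 1), P (ω (i + 1)) (ω i)) = Fr P c := by
      rw [← prod_darts_rev P c]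
      exact Finset.prod_congr rfl fun i _ => by rw [key i]
    rw [e1, e2] at hyp'
    exact hyp'

end Stmt16x

/-- algebraic Kolmogorov theorem: for nowhere-zero `P` on the arcs of a
connected graph, `P^ω = P^{r(ω)}` for every closed path `ω` iff there is a nowhere-zero
`κ : V → ℝ` with `κ(v) P_{v→w} = κ(w) P_{w→v}` on every arc. -/
theorem stmt_16 {V : Type*} [Fintype V] [DecidableEq V]
    (G : SimpleGraph V) (hG : G.Connected)
    (P : V → V → ℝ) (hP : ∀ v w, G.Adj v w → P v w ≠ 0) :
    (∀ (n : ℕ) (ω : Fin (n + 1) → V), (∀ i, G.Adj (ω i) (ω (i + 1))) →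
      (∏ i, P (ω i) (ω (i + 1))) = ∏ i, P (ω (i + 1)) (ω i)) ↔
    (∃ κ : V → ℝ, (∀ v, κ v ≠ 0) ∧
      ∀ v w, G.Adj v w → κ v * P v w = κ w * P w v) := by
  constructor
  · intro hyp
    obtain ⟨r⟩ := hG.nonempty
    have reach : ∀ v, G.Reachable r v := fun v => hG.preconnected r v
    set p : ∀ v, G.Walk r v := fun v => (reach v).some with hp
    refine ⟨fun v => Stmt16.F P (p v) / Stmt16.Fr P (p v),
      fun v => div_ne_zero (Stmt16.F_ne_zero hP _) (Stmt16.Fr_ne_zero hP _), ?_⟩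
    intro v w hvw
    have pind : ∀ {x : V} (q1 q2 : G.Walk r x),
        Stmt16.F P q1 * Stmt16.Fr P q2 = Stmt16.F P q2 * Stmt16.Fr P q1 := by
      intro x q1 q2
      have hc := Stmt16x.closed_walk_eq P hyp (q1.append q2.reverse)
      rw [Stmt16.F_append, Stmt16.Fr_append, Stmt16.F_reverse, Stmt16.Fr_reverse] at hc
      linarith [hc]
    have hq := pind (p w) ((p v).append (SimpleGraph.Walk.cons hvw SimpleGraph.Walk.nil))
    rw [Stmt16.F_append, Stmt16.Fr_append] at hq
    have hF1 : Stmt16.F P (SimpleGraph.Walk.cons hvw SimpleGraph.Walk.nil) = P v w := by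
      simp [Stmt16.F]
    have hFr1 : Stmt16.Fr P (SimpleGraph.Walk.cons hvw SimpleGraph.Walk.nil) = P w v := by
      simp [Stmt16.Fr]
    rw [hF1, hFr1] at hq
    have h1 := Stmt16.Fr_ne_zero hP (p v)
    have h2 := Stmt16.Fr_ne_zero hP (p w)
    field_simp
    linear_combination -hq
  · rintro ⟨κ, hκ, hrel⟩ n ω hadj
    have shift : ∏ i : Fin (n + 1), κ (ω (i + 1)) = ∏ i, κ (ω i) :=
      Fintype.prod_equiv (Equiv.addRight 1) _ _ (fun i => rfl)
    have key : (∏ i, κ (ω i)) * ∏ i, P (ω i) (ω (i + 1)) =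
        (∏ i, κ (ω i)) * ∏ i, P (ω (i + 1)) (ω i) := by
      rw [← Finset.prod_mul_distrib]
      calc ∏ i, κ (ω i) * P (ω i) (ω (i + 1))
          = ∏ i, κ (ω (i + 1)) * P (ω (i + 1)) (ω i) :=
            Finset.prod_congr rfl fun i _ => hrel _ _ (hadj i)
        _ = (∏ i, κ (ω (i + 1))) * ∏ i, P (ω (i + 1)) (ω i) := Finset.prod_mul_distrib
        _ = _ := by rw [shift]
    exact mul_left_cancel₀ (Finset.prod_ne_zero_iff.mpr fun i _ => hκ _) key
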